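/- Let Q be a finite set, let f ≥ 2, and let F_1, …, F_f ⊆ Q be pairwise disjoint nonempty subsets (the accepting sets). Define the accepting frontier function Acc(q, 𝔽) by: Acc(q,𝔽) = 𝔽 \ F_j if q ∈ F_j and 𝔽 ≠ F_j; Acc(q,𝔽) = (⋃_{k=1}^{f} F_k) \ F_j if q ∈ F_j and 𝔽 = F_j; and Acc(q,𝔽) = 𝔽 if q does not belong to any F_j. Given a sequence θ : ℕ → Q, define A_0 = ⋃_{k=1}^{f} F_k and A_{n+1} = Acc(θ_n, A_n). If the set {n : θ_n ∈ A_n} is infinite (i.e., the agent receives the positive reward at infinitely many steps), then for every j ∈ {1,…,f} the set {n : θ_n ∈ F_j} is infinite (i.e., θ satisfies the generalized Büchi acceptance condition of visiting every accepting set infinitely often). -/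

import Mathlib

open Classical in
/-- Step function on index frontiers. -/
noncomputable def fStep {Q : Type*} {f : ℕ} (F : Fin f → Set Q) (q : Q)
    (S : Finset (Fin f)) : Finset (Fin f) :=
  if h : ∃ k, q ∈ F k then
    (if S = {h.choose} then Finset.univ \ {h.choose} else S \ {h.choose})
  else S

noncomputable def fSeq {Q : Type*} {f : ℕ} (F : Fin f → Set Q) (θ : ℕ → Q) :
    ℕ → Finset (Fin f)
  | 0 => Finset.univ
  | n + 1 => fStep F (θ n) (fSeq F θ n)

lemma decrease_aux (g : ℕ → ℕ) (M : ℕ)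
    (hmono : ∀ n, M ≤ n → g (n + 1) ≤ g n)
    (T : Set ℕ) (hT : T.Infinite)
    (hstrict : ∀ n ∈ T, M ≤ n → g (n + 1) < g n) : False := by
  have hle : ∀ a b, M ≤ a → a ≤ b → g b ≤ g a := by
    intro a b ha hab
    induction b, hab using Nat.le_induction with
    | base => exact le_refl _
    | succ b hb ih => exact le_trans (hmono b (le_trans ha hb)) ih
  have key : ∀ k, ∃ n, M ≤ n ∧ g n + k ≤ g M := by
    intro k
    induction k with
    | zero => exact ⟨M, le_refl M, by omega⟩
    | succ k ih =>
      obtain ⟨n, hn, hgn⟩ := ih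
      obtain ⟨m, hm, hnm⟩ := hT.exists_gt n
      have h1 : g (m + 1) < g m := hstrict m hm (le_trans hn hnm.le)
      have h2 : g m ≤ g n := hle n m hn hnm.le
      exact ⟨m + 1, by omega, by omega⟩
  obtain ⟨n, hn, h⟩ := key (g M + 1)
  omega

/-- If the accepting-frontier reward scheme gives a positive reward
(i.e. `θ n ∈ A n`) at infinitely many steps, then the run `θ` visits every
accepting set `F j` infinitely often (generalized Büchi acceptance). -/
theorem stmt_13 {Q : Type*} [Fintype Q]
    (f : ℕ) (hf : 2 ≤ f) (F : Fin f → Set Q)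
    (hFne : ∀ j, (F j).Nonempty)
    (hFdisj : ∀ j k, j ≠ k → Disjoint (F j) (F k))
    (Acc : Q → Set Q → Set Q)
    (hAcc1 : ∀ (q : Q) (𝔽 : Set Q) (j : Fin f), q ∈ F j → 𝔽 ≠ F j → Acc q 𝔽 = 𝔽 \ F j)
    (hAcc2 : ∀ (q : Q) (𝔽 : Set Q) (j : Fin f), q ∈ F j → 𝔽 = F j →
      Acc q 𝔽 = (⋃ k, F k) \ F j)
    (hAcc3 : ∀ (q : Q) (𝔽 : Set Q), (∀ j, q ∉ F j) → Acc q 𝔽 = 𝔽)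
    (θ : ℕ → Q) (A : ℕ → Set Q)
    (hA0 : A 0 = ⋃ k, F k)
    (hAsucc : ∀ n, A (n + 1) = Acc (θ n) (A n))
    (hreward : {n : ℕ | θ n ∈ A n}.Infinite) :
    ∀ j : Fin f, {n : ℕ | θ n ∈ F j}.Infinite := by
  classical
  have hFinNe : Nonempty (Fin f) := ⟨⟨0, by omega⟩⟩
  have huniq : ∀ {q : Q} {a b : Fin f}, q ∈ F a → q ∈ F b → a = b := by
    intro q a b ha hb
    by_contra hne
    exact Set.disjoint_left.mp (hFdisj a b hne) ha hb
  set S := fSeq F θ with hSdef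
  have hSsucc : ∀ n, S (n + 1) = fStep F (θ n) (S n) := fun n => rfl
  -- Invariant: S n is nonempty and A n is the union of F over S n.
  have hinv : ∀ n, (S n).Nonempty ∧ A n = ⋃ k ∈ S n, F k := by
    intro n
    induction n with
    | zero =>
      refine ⟨Finset.univ_nonempty, ?_⟩
      rw [hA0]
      ext x; simp [show S 0 = Finset.univ from rfl]
    | succ n ih =>
      obtain ⟨hne, hAn⟩ := ih
      rw [hAsucc n, hSsucc n]
      by_cases h : ∃ k, θ n ∈ F k
      · have hkmem : θ n ∈ F h.choose := h.choose_spec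
        set k := h.choose with hkdef
        rw [fStep, dif_pos h]
        by_cases hsing : S n = {k}
        · have hAeq : A n = F k := by rw [hAn, hsing]; simp
          rw [hAcc2 _ _ _ hkmem hAeq, if_pos hsing]
          constructor
          · obtain ⟨m, hm⟩ := Fintype.exists_ne_of_one_lt_card (by simp; omega) k
            exact ⟨m, by simp [hm]; exact hm⟩
          · ext x
            simp only [Set.mem_diff, Set.mem_iUnion, Finset.mem_sdiff, Finset.mem_univ,
              Finset.mem_singleton, true_and, exists_prop]
            constructor
            · rintro ⟨⟨i, hi⟩, hxk⟩
              exact ⟨i, fun hik => hxk (by rw [hkdef, ← hik]; exact hi), hi⟩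
            · rintro ⟨i, hik, hi⟩
              exact ⟨⟨i, hi⟩, fun hxk => hik (huniq hi hxk)⟩
        · obtain ⟨m, hmS, hmk⟩ : ∃ m ∈ S n, m ≠ k := by
            by_contra hc
            push_neg at hc
            exact hsing (Finset.eq_singleton_iff_nonempty_unique_mem.mpr ⟨hne, hc⟩)
          have hAne : A n ≠ F k := by
            intro heq
            obtain ⟨x, hx⟩ := hFne m
            have hxA : x ∈ A n := by
              rw [hAn]
              exact Set.mem_biUnion hmS hx
            rw [heq] at hxA
            exact hmk (huniq hx hxA)
          rw [hAcc1 _ _ _ hkmem hAne, if_neg hsing]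
          constructor
          · exact ⟨m, Finset.mem_sdiff.mpr ⟨hmS, by simp [hmk]; exact hmk⟩⟩
          · rw [hAn]
            ext x
            simp only [Set.mem_diff, Set.mem_iUnion, Finset.mem_sdiff,
              Finset.mem_singleton, exists_prop]
            constructor
            · rintro ⟨⟨i, hiS, hi⟩, hxk⟩
              exact ⟨i, ⟨hiS, fun hik => hxk (by rw [hkdef, ← hik]; exact hi)⟩, hi⟩
            · rintro ⟨i, ⟨hiS, hik⟩, hi⟩
              exact ⟨⟨i, hiS, hi⟩, fun hxk => hik (huniq hi hxk)⟩
      · push_neg at h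
        rw [hAcc3 _ _ h, fStep, dif_neg (by push_neg; exact h)]
        exact ⟨hne, hAn⟩
  intro j
  by_contra hfin
  rw [Set.not_infinite] at hfin
  obtain ⟨N, hN⟩ : ∃ N, ∀ n, N ≤ n → θ n ∉ F j := by
    obtain ⟨N, hNb⟩ := hfin.bddAbove
    exact ⟨N + 1, fun n hn hmem => by have := hNb hmem; omega⟩
  -- case analysis of a single step, for n ≥ N
  have hstepcase : ∀ n, N ≤ n →
      ((∀ k, θ n ∉ F k) ∧ S (n + 1) = S n) ∨
      (∃ k, θ n ∈ F k ∧ k ≠ j ∧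
        ((S n = {k} ∧ S (n + 1) = Finset.univ \ {k}) ∨ S (n + 1) = S n \ {k})) := by
    intro n hn
    by_cases h : ∃ k, θ n ∈ F k
    · right
      have hkmem : θ n ∈ F h.choose := h.choose_spec
      refine ⟨h.choose, hkmem, fun hkj => hN n hn (hkj ▸ hkmem), ?_⟩
      rw [hSsucc n, fStep, dif_pos h]
      by_cases hsing : S n = {h.choose}
      · exact Or.inl ⟨hsing, by rw [if_pos hsing]⟩
      · exact Or.inr (by rw [if_neg hsing])
    · left
      push_neg at h
      exact ⟨h, by rw [hSsucc n, fStep, dif_neg (by push_neg; exact h)]⟩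
  -- a reward step where j ∈ S n strictly shrinks S; and j persists
  have hrewardk : ∀ n, θ n ∈ A n → ∃ k ∈ S n, θ n ∈ F k := by
    intro n hr
    rw [(hinv n).2] at hr
    simpa using hr
  -- there is some n₀ ≥ N with j ∈ S n₀
  have hexists : ∃ n₀, N ≤ n₀ ∧ j ∈ S n₀ := by
    by_contra hc
    push_neg at hc
    have hmono : ∀ n, N ≤ n → (S (n + 1)).card ≤ (S n).card := by
      intro n hn
      rcases hstepcase n hn with ⟨_, h⟩ | ⟨k, hk, hkj, ⟨hsing, hreset⟩ | hrem⟩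
      · rw [h]
      · exfalso
        apply hc (n + 1) (by omega)
        rw [hreset]
        simp [Ne.symm hkj]
      · rw [hrem]
        exact Finset.card_le_card Finset.sdiff_subset
    have hstrict : ∀ n ∈ {n : ℕ | θ n ∈ A n}, N ≤ n → (S (n + 1)).card < (S n).card := by
      intro n hnr hn
      obtain ⟨k0, hk0S, hk0⟩ := hrewardk n hnr
      rcases hstepcase n hn with ⟨hno, _⟩ | ⟨k, hk, hkj, ⟨hsing, hreset⟩ | hrem⟩
      · exact absurd hk0 (hno k0)
      · exfalso
        apply hc (n + 1) (by omega)
        rw [hreset]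
        simp [Ne.symm hkj]
      · rw [hrem]
        have : k0 = k := huniq hk0 hk
        rw [← Finset.erase_eq]
        exact Finset.card_erase_lt_of_mem (this ▸ hk0S)
    exact decrease_aux (fun n => (S n).card) N hmono _ hreward hstrict
  obtain ⟨n₀, hn₀N, hjS⟩ := hexists
  -- j persists in S from n₀ on
  have hpers : ∀ n, n₀ ≤ n → j ∈ S n := by
    intro n hn
    induction n, hn using Nat.le_induction with
    | base => exact hjS
    | succ n hn ih =>
      rcases hstepcase n (le_trans hn₀N hn) with ⟨_, h⟩ | ⟨k, hk, hkj, ⟨hsing, hreset⟩ | hrem⟩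
      · rw [h]; exact ih
      · rw [hreset]; simp [Ne.symm hkj]
      · rw [hrem]
        simp [ih, Ne.symm hkj]
  have hmono2 : ∀ n, n₀ ≤ n → (S (n + 1)).card ≤ (S n).card := by
    intro n hn
    rcases hstepcase n (le_trans hn₀N hn) with ⟨_, h⟩ | ⟨k, hk, hkj, ⟨hsing, hreset⟩ | hrem⟩
    · rw [h]
    · exfalso
      have := hpers n hn
      rw [hsing] at this
      have hjk : j = k := by simpa using this
      exact hkj hjk.symm
    · rw [hrem]
      exact Finset.card_le_card Finset.sdiff_subset
  have hstrict2 : ∀ n ∈ {n : ℕ | θ n ∈ A n}, n₀ ≤ n → (S (n + 1)).card < (S n).card := by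
    intro n hnr hn
    obtain ⟨k0, hk0S, hk0⟩ := hrewardk n hnr
    rcases hstepcase n (le_trans hn₀N hn) with ⟨hno, _⟩ | ⟨k, hk, hkj, ⟨hsing, hreset⟩ | hrem⟩
    · exact absurd hk0 (hno k0)
    · exfalso
      have := hpers n hn
      rw [hsing] at this
      have hjk : j = k := by simpa using this
      exact hkj hjk.symm
    · rw [hrem]
      have hk0k : k0 = k := huniq hk0 hk
      rw [← Finset.erase_eq]
      exact Finset.card_erase_lt_of_mem (hk0k ▸ hk0S)
  exact decrease_aux (fun n => (S n).card) n₀ hmono2 _ hreward hstrict2
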